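/- arXiv:2603.03003 — 3 statements merged into one kernel-verified Lean document; each statement's English description precedes it below -/
import Mathlib

section
/- For the MSTB model with 0 < σ < 1, the configuration φ_{K2}(x) = (q tanh(σ(x − x₀)), λ √(1 − σ²) sech(σ(x − x₀))) with q, λ ∈ {±1} is a static solution of the coupled field equations −φ'' = 2φ(1 − φ² − ψ²), −ψ'' = 2ψ(1 − φ² − ψ² − σ²/2), and its total energy equals 2σ(1 − σ²/3). -/
open MeasureTheory Filter Topology

private lemma my_hasDerivAt_tanh (y : ℝ) :
    HasDerivAt Real.tanh (1 - Real.tanh y ^ 2) y := by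
  have h := (Real.hasDerivAt_sinh y).div (Real.hasDerivAt_cosh y) (Real.cosh_pos y).ne'
  have ht : Real.tanh = fun y => Real.sinh y / Real.cosh y :=
    funext fun y => Real.tanh_eq_sinh_div_cosh y
  rw [ht]
  refine h.congr_deriv (Eq.symm ?_)
  have hc := Real.cosh_sq_sub_sinh_sq y
  have h0 := (Real.cosh_pos y).ne'
  field_simp

private lemma my_sech_sq (y : ℝ) : (1 / Real.cosh y) ^ 2 = 1 - Real.tanh y ^ 2 := by
  have h0 : Real.cosh y ≠ 0 := (Real.cosh_pos y).ne'
  have hc := Real.cosh_sq_sub_sinh_sq y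
  rw [Real.tanh_eq_sinh_div_cosh]
  field_simp
  linarith

private lemma my_tanh_exp (y : ℝ) :
    Real.tanh y = (1 - Real.exp (-(2*y))) / (1 + Real.exp (-(2*y))) := by
  have h1 : Real.exp y ≠ 0 := (Real.exp_pos y).ne'
  have h2 : (0:ℝ) < 1 + (Real.exp y)⁻¹ * (Real.exp y)⁻¹ := by positivity
  have e : Real.exp (-(2*y)) = (Real.exp y)⁻¹ * (Real.exp y)⁻¹ := by
    rw [show -(2*y) = -y + -y by ring, Real.exp_add, Real.exp_neg]
  rw [Real.tanh_eq_sinh_div_cosh, Real.sinh_eq, Real.cosh_eq, Real.exp_neg, e]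
  rw [div_eq_div_iff (by positivity) h2.ne']
  field_simp

private lemma my_tendsto_tanh : Tendsto Real.tanh atTop (𝓝 1) := by
  have h : Tendsto (fun y : ℝ => Real.exp (-(2*y))) atTop (𝓝 0) := by
    apply Real.tendsto_exp_atBot.comp
    have h2 : Tendsto (fun y : ℝ => 2*y) atTop atTop :=
      Tendsto.const_mul_atTop two_pos tendsto_id
    exact tendsto_neg_atTop_atBot.comp h2
  have hnum : Tendsto (fun y : ℝ => 1 - Real.exp (-(2*y))) atTop (𝓝 (1 - 0)) :=
    Tendsto.sub tendsto_const_nhds h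
  have hden : Tendsto (fun y : ℝ => 1 + Real.exp (-(2*y))) atTop (𝓝 (1 + 0)) :=
    Tendsto.add tendsto_const_nhds h
  have h4 := hnum.div hden (by norm_num)
  have h3 : ((1:ℝ) - 0) / (1 + 0) = 1 := by norm_num
  rw [h3] at h4
  exact h4.congr fun y => (my_tanh_exp y).symm

private noncomputable def Gfun (σ : ℝ) : ℝ → ℝ := fun y =>
  σ^2*(1-σ^2) * (1 / Real.cosh (σ * y)) ^ 2 + σ^4 * (1 / Real.cosh (σ * y)) ^ 4

private noncomputable def Ffun (σ : ℝ) : ℝ → ℝ := fun t =>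
  σ*(1-σ^2) * Real.tanh (σ * t) + σ^3 * (Real.tanh (σ * t) - Real.tanh (σ * t) ^ 3 / 3)

private lemma Ffun_hasDeriv (σ t : ℝ) : HasDerivAt (Ffun σ) (Gfun σ t) t := by
  have hut : HasDerivAt (fun t : ℝ => σ * t) σ t := by
    simpa using (hasDerivAt_id t).const_mul σ
  have hTt : HasDerivAt (fun t : ℝ => Real.tanh (σ * t))
      ((1 - Real.tanh (σ * t) ^ 2) * σ) t :=
    (my_hasDerivAt_tanh (σ * t)).comp t hut
  have h := ((hTt.const_mul (σ*(1-σ^2))).add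
    ((hTt.sub ((hTt.pow 3).div_const 3)).const_mul (σ^3)))
  unfold Ffun Gfun
  refine h.congr_deriv (Eq.symm ?_)
  have hs := my_sech_sq (σ * t)
  push_cast
  linear_combination (σ^2*(1-σ^2) + σ^4*(1 - Real.tanh (σ*t)^2)
    + σ^4*(1/Real.cosh (σ*t))^2) * hs

private lemma Gfun_integral {σ : ℝ} (hσ0 : 0 < σ) (hσ1 : σ < 1) :
    ∫ x : ℝ, Gfun σ x = 2 * σ * (1 - σ ^ 2 / 3) := by
  have hσsq : (0:ℝ) ≤ 1 - σ ^ 2 := by nlinarith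
  have hGabs : ∀ y : ℝ, Gfun σ |y| = Gfun σ y := by
    intro y
    unfold Gfun
    rw [show σ * |y| = |σ * y| by rw [abs_mul, abs_of_pos hσ0], Real.cosh_abs]
  have step2 : (∫ x : ℝ, Gfun σ x) = 2 * ∫ x in Set.Ioi (0:ℝ), Gfun σ x := by
    rw [← integral_comp_abs (f := Gfun σ)]
    congr 1
    funext x
    rw [hGabs]
  have hGpos : ∀ t ∈ Set.Ioi (0:ℝ), 0 ≤ Gfun σ t := by
    intro t _
    unfold Gfun
    have h1 : (0:ℝ) ≤ σ^2*(1-σ^2) := mul_nonneg (sq_nonneg σ) hσsq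
    have h2 : (0:ℝ) ≤ (1 / Real.cosh (σ * t)) ^ 2 := by positivity
    have h3 : (0:ℝ) ≤ σ^4 * (1 / Real.cosh (σ * t)) ^ 4 := by positivity
    nlinarith
  have hFlim : Tendsto (Ffun σ) atTop (𝓝 (σ - σ^3/3)) := by
    have htσ : Tendsto (fun t : ℝ => Real.tanh (σ * t)) atTop (𝓝 1) := by
      have h2 : Tendsto (fun t : ℝ => σ * t) atTop atTop :=
        Tendsto.const_mul_atTop hσ0 tendsto_id
      exact my_tendsto_tanh.comp h2
    have hcont : Continuous (fun y : ℝ => σ*(1-σ^2) * y + σ^3 * (y - y^3/3)) := by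
      continuity
    have hc : Tendsto (fun y : ℝ => σ*(1-σ^2) * y + σ^3 * (y - y^3/3)) (𝓝 1)
        (𝓝 (σ - σ^3/3)) := by
      have h := hcont.tendsto 1
      have h2 : σ*(1-σ^2) * 1 + σ^3 * (1 - 1^3/3) = σ - σ^3/3 := by ring
      rw [h2] at h
      exact h
    exact hc.comp htσ
  have key := integral_Ioi_of_hasDerivAt_of_nonneg'
    (g := Ffun σ) (g' := Gfun σ) (a := 0) (l := σ - σ^3/3)
    (fun t _ => Ffun_hasDeriv σ t) hGpos hFlim
  rw [step2, key]
  have hF0 : Ffun σ 0 = 0 := by unfold Ffun; simp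
  rw [hF0]
  ring

set_option maxHeartbeats 1000000 in
/-- For the MSTB model with `0 < σ < 1`, the kink
`φ_{K2}(x) = (q tanh(σ(x - x₀)), λ √(1-σ²) sech(σ(x - x₀)))` with `q, λ = ±1`
is a static solution of the coupled field equations
`-φ'' = 2φ(1 - φ² - ψ²)`, `-ψ'' = 2ψ(1 - φ² - ψ² - σ²/2)`, and its total
energy equals `2σ(1 - σ²/3)`. -/
theorem mstb_kink2 (σ x₀ q l : ℝ) (hσ0 : 0 < σ) (hσ1 : σ < 1)
    (hq : q = 1 ∨ q = -1) (hl : l = 1 ∨ l = -1) :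
    let φ : ℝ → ℝ := fun x => q * Real.tanh (σ * (x - x₀))
    let ψ : ℝ → ℝ := fun x => l * Real.sqrt (1 - σ ^ 2) * (1 / Real.cosh (σ * (x - x₀)))
    (∀ x, -(deriv (deriv φ) x) = 2 * φ x * (1 - (φ x) ^ 2 - (ψ x) ^ 2)) ∧
    (∀ x, -(deriv (deriv ψ) x) = 2 * ψ x * (1 - (φ x) ^ 2 - (ψ x) ^ 2 - σ ^ 2 / 2)) ∧
    (∫ x : ℝ, ((1 / 2) * ((deriv φ x) ^ 2 + (deriv ψ x) ^ 2)
        + ((1 / 2) * ((φ x) ^ 2 + (ψ x) ^ 2 - 1) ^ 2 + (σ ^ 2 / 2) * (ψ x) ^ 2))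
      = 2 * σ * (1 - σ ^ 2 / 3)) := by
  intro φ ψ
  have hσsq : (0:ℝ) ≤ 1 - σ ^ 2 := by nlinarith
  have hw2 : (Real.sqrt (1 - σ ^ 2)) ^ 2 = 1 - σ ^ 2 := Real.sq_sqrt hσsq
  have hq2 : q ^ 2 = 1 := by rcases hq with rfl | rfl <;> norm_num
  have hl2 : l ^ 2 = 1 := by rcases hl with rfl | rfl <;> norm_num
  have hsqx : ∀ x : ℝ, (1 / Real.cosh (σ * (x - x₀))) ^ 2 = 1 - (Real.tanh (σ * (x - x₀))) ^ 2 := fun x => my_sech_sq (σ * (x - x₀))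
  have hu : ∀ x : ℝ, HasDerivAt (fun x : ℝ => σ * (x - x₀)) σ x := by
    intro x
    simpa using ((hasDerivAt_id x).sub_const x₀).const_mul σ
  have hT : ∀ x : ℝ, HasDerivAt (fun x : ℝ => Real.tanh (σ * (x - x₀)))
      (σ * (1 / Real.cosh (σ * (x - x₀))) ^ 2) x := by
    intro x
    have h := (my_hasDerivAt_tanh (σ * (x - x₀))).comp x (hu x)
    have h2 : (1 - Real.tanh (σ * (x - x₀)) ^ 2) * σ = σ * (1 / Real.cosh (σ * (x - x₀))) ^ 2 := by
      rw [hsqx x]; ring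
    rw [← h2]
    exact h
  have hS : ∀ x : ℝ, HasDerivAt (fun x : ℝ => 1 / Real.cosh (σ * (x - x₀)))
      (-(σ * (Real.tanh (σ * (x - x₀))) * (1 / Real.cosh (σ * (x - x₀))))) x := by
    intro x
    have hc := (Real.hasDerivAt_cosh (σ * (x - x₀))).comp x (hu x)
    have h := hc.inv (Real.cosh_pos (σ * (x - x₀))).ne'
    have h0 := (Real.cosh_pos (σ * (x - x₀))).ne'
    have heq : -(Real.sinh (σ * (x - x₀)) * σ) / Real.cosh (σ * (x - x₀)) ^ 2
        = -(σ * (Real.tanh (σ * (x - x₀))) * (1 / Real.cosh (σ * (x - x₀)))) := by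
      rw [Real.tanh_eq_sinh_div_cosh]
      field_simp
    rw [← heq]
    simp only [one_div]
    exact h
  have hφ1 : ∀ x : ℝ, HasDerivAt φ (q * σ * (1 / Real.cosh (σ * (x - x₀))) ^ 2) x := by
    intro x
    have h := (hT x).const_mul q
    have h2 : q * (σ * (1 / Real.cosh (σ * (x - x₀))) ^ 2) = q * σ * (1 / Real.cosh (σ * (x - x₀))) ^ 2 := by ring
    rw [h2] at h
    exact h
  have hψ1 : ∀ x : ℝ, HasDerivAt ψ (-(l * (Real.sqrt (1 - σ ^ 2)) * σ) * ((Real.tanh (σ * (x - x₀))) * (1 / Real.cosh (σ * (x - x₀))))) x := by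
    intro x
    have h := (hS x).const_mul (l * (Real.sqrt (1 - σ ^ 2)))
    have h2 : l * (Real.sqrt (1 - σ ^ 2)) * -(σ * (Real.tanh (σ * (x - x₀))) * (1 / Real.cosh (σ * (x - x₀)))) = -(l * (Real.sqrt (1 - σ ^ 2)) * σ) * ((Real.tanh (σ * (x - x₀))) * (1 / Real.cosh (σ * (x - x₀)))) := by ring
    rw [h2] at h
    exact h
  have hdφ : deriv φ = fun x => q * σ * (1 / Real.cosh (σ * (x - x₀))) ^ 2 := funext fun x => (hφ1 x).deriv
  have hdψ : deriv ψ = fun x => -(l * (Real.sqrt (1 - σ ^ 2)) * σ) * ((Real.tanh (σ * (x - x₀))) * (1 / Real.cosh (σ * (x - x₀)))) :=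
    funext fun x => (hψ1 x).deriv
  have hφ2 : ∀ x : ℝ, deriv (deriv φ) x
      = q * σ * ((2:ℕ) * (1 / Real.cosh (σ * (x - x₀))) ^ 1 * -(σ * (Real.tanh (σ * (x - x₀))) * (1 / Real.cosh (σ * (x - x₀))))) := by
    intro x
    rw [hdφ]
    exact (((hS x).pow 2).const_mul (q * σ)).deriv
  have hψ2 : ∀ x : ℝ, deriv (deriv ψ) x
      = -(l * (Real.sqrt (1 - σ ^ 2)) * σ) * (σ * (1 / Real.cosh (σ * (x - x₀))) ^ 2 * (1 / Real.cosh (σ * (x - x₀))) + (Real.tanh (σ * (x - x₀))) * -(σ * (Real.tanh (σ * (x - x₀))) * (1 / Real.cosh (σ * (x - x₀))))) := by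
    intro x
    rw [hdψ]
    exact (((hT x).mul (hS x)).const_mul (-(l * (Real.sqrt (1 - σ ^ 2)) * σ))).deriv
  refine ⟨?_, ?_, ?_⟩
  · intro x
    rw [hφ2 x]
    show -(q * σ * ((2:ℕ) * (1 / Real.cosh (σ * (x - x₀))) ^ 1 * -(σ * (Real.tanh (σ * (x - x₀))) * (1 / Real.cosh (σ * (x - x₀))))))
      = 2 * (q * (Real.tanh (σ * (x - x₀)))) * (1 - (q * (Real.tanh (σ * (x - x₀)))) ^ 2 - (l * (Real.sqrt (1 - σ ^ 2)) * (1 / Real.cosh (σ * (x - x₀)))) ^ 2)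
    push_cast
    linear_combination (2*q*(Real.tanh (σ * (x - x₀)))^3) * hq2 + (2*q*(Real.tanh (σ * (x - x₀)))*(1 / Real.cosh (σ * (x - x₀)))^2*(Real.sqrt (1 - σ ^ 2))^2) * hl2
      + (2*q*(Real.tanh (σ * (x - x₀)))*(1 / Real.cosh (σ * (x - x₀)))^2) * hw2 + (2*q*(Real.tanh (σ * (x - x₀)))) * (hsqx x)
  · intro x
    rw [hψ2 x]
    show -(-(l * (Real.sqrt (1 - σ ^ 2)) * σ) * (σ * (1 / Real.cosh (σ * (x - x₀))) ^ 2 * (1 / Real.cosh (σ * (x - x₀))) + (Real.tanh (σ * (x - x₀))) * -(σ * (Real.tanh (σ * (x - x₀))) * (1 / Real.cosh (σ * (x - x₀))))))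
      = 2 * (l * (Real.sqrt (1 - σ ^ 2)) * (1 / Real.cosh (σ * (x - x₀)))) * (1 - (q * (Real.tanh (σ * (x - x₀)))) ^ 2 - (l * (Real.sqrt (1 - σ ^ 2)) * (1 / Real.cosh (σ * (x - x₀)))) ^ 2 - σ ^ 2 / 2)
    linear_combination (2*l*(Real.tanh (σ * (x - x₀)))^2*(1 / Real.cosh (σ * (x - x₀)))*(Real.sqrt (1 - σ ^ 2))) * hq2 + (2*l*(1 / Real.cosh (σ * (x - x₀)))^3*(Real.sqrt (1 - σ ^ 2))^3) * hl2
      + (2*l*(1 / Real.cosh (σ * (x - x₀)))^3*(Real.sqrt (1 - σ ^ 2))) * hw2 + (2*l*(1 / Real.cosh (σ * (x - x₀)))*(Real.sqrt (1 - σ ^ 2)) - l*(1 / Real.cosh (σ * (x - x₀)))*(Real.sqrt (1 - σ ^ 2))*σ^2) * (hsqx x)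
  · have hintegrand : (fun x : ℝ => ((1 / 2) * ((deriv φ x) ^ 2 + (deriv ψ x) ^ 2)
          + ((1 / 2) * ((φ x) ^ 2 + (ψ x) ^ 2 - 1) ^ 2 + (σ ^ 2 / 2) * (ψ x) ^ 2)))
        = fun x => Gfun σ (x - x₀) := by
      funext x
      simp only [hdφ, hdψ]
      show (1 / 2) * ((q * σ * (1 / Real.cosh (σ * (x - x₀))) ^ 2) ^ 2 + (-(l * (Real.sqrt (1 - σ ^ 2)) * σ) * ((Real.tanh (σ * (x - x₀))) * (1 / Real.cosh (σ * (x - x₀))))) ^ 2)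
          + ((1 / 2) * ((q * (Real.tanh (σ * (x - x₀)))) ^ 2 + (l * (Real.sqrt (1 - σ ^ 2)) * (1 / Real.cosh (σ * (x - x₀)))) ^ 2 - 1) ^ 2
            + (σ ^ 2 / 2) * (l * (Real.sqrt (1 - σ ^ 2)) * (1 / Real.cosh (σ * (x - x₀)))) ^ 2)
        = Gfun σ (x - x₀)
      unfold Gfun
      linear_combination
        (1/2*(1 / Real.cosh (σ * (x - x₀)))^4*σ^2 - (Real.tanh (σ * (x - x₀)))^2 + 1/2*(Real.tanh (σ * (x - x₀)))^4 + l^2*(Real.tanh (σ * (x - x₀)))^2*(1 / Real.cosh (σ * (x - x₀)))^2*(Real.sqrt (1 - σ ^ 2))^2 + 1/2*q^2*(Real.tanh (σ * (x - x₀)))^4) * hq2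
        + (-((1 / Real.cosh (σ * (x - x₀)))^2*(Real.sqrt (1 - σ ^ 2))^2) + 1/2*(1 / Real.cosh (σ * (x - x₀)))^2*(Real.sqrt (1 - σ ^ 2))^2*σ^2 + 1/2*(1 / Real.cosh (σ * (x - x₀)))^4*(Real.sqrt (1 - σ ^ 2))^4 + (Real.tanh (σ * (x - x₀)))^2*(1 / Real.cosh (σ * (x - x₀)))^2*(Real.sqrt (1 - σ ^ 2))^2
            + 1/2*(Real.tanh (σ * (x - x₀)))^2*(1 / Real.cosh (σ * (x - x₀)))^2*(Real.sqrt (1 - σ ^ 2))^2*σ^2 + 1/2*l^2*(1 / Real.cosh (σ * (x - x₀)))^4*(Real.sqrt (1 - σ ^ 2))^4) * hl2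
        + (-((1 / Real.cosh (σ * (x - x₀)))^2) + 1/2*(1 / Real.cosh (σ * (x - x₀)))^2*σ^2 + 1/2*(1 / Real.cosh (σ * (x - x₀)))^4 - 1/2*(1 / Real.cosh (σ * (x - x₀)))^4*σ^2 + 1/2*(1 / Real.cosh (σ * (x - x₀)))^4*(Real.sqrt (1 - σ ^ 2))^2
            + (Real.tanh (σ * (x - x₀)))^2*(1 / Real.cosh (σ * (x - x₀)))^2 + 1/2*(Real.tanh (σ * (x - x₀)))^2*(1 / Real.cosh (σ * (x - x₀)))^2*σ^2) * hw2
        + (-(1/2:ℝ) + 1/2*(1 / Real.cosh (σ * (x - x₀)))^2 - 1/2*(1 / Real.cosh (σ * (x - x₀)))^2*σ^2 - 1/2*(1 / Real.cosh (σ * (x - x₀)))^2*σ^4 + 1/2*(Real.tanh (σ * (x - x₀)))^2) * (hsqx x)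
    rw [hintegrand, integral_sub_right_eq_self (Gfun σ) x₀]
    exact Gfun_integral hσ0 hσ1
end

section
/- For the MSTB kink (tanh x, 0), the orthogonal fluctuation operator H₂₂ = −d²/dx² + σ² − 2 sech²x has the discrete eigenfunction sech(x) with eigenvalue ω² = σ² − 1. Consequently the kink (tanh x, 0) is linearly unstable (negative eigenvalue) when 0 < σ < 1 and has a positive orthogonal shape-mode eigenvalue when σ > 1. -/
lemma sech_deriv : deriv (fun x : ℝ => 1 / Real.cosh x)
    = fun x => -Real.sinh x / Real.cosh x ^ 2 := by
  funext x
  have h : Real.cosh x ≠ 0 := (Real.cosh_pos x).ne'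
  rw [deriv_fun_div (differentiableAt_const 1) Real.differentiable_cosh.differentiableAt h]
  simp [Real.deriv_cosh]

lemma sech_deriv2 (x : ℝ) : deriv (deriv (fun x : ℝ => 1 / Real.cosh x)) x
    = 1 / Real.cosh x - 2 / Real.cosh x ^ 3 := by
  rw [sech_deriv]
  have h : Real.cosh x ≠ 0 := (Real.cosh_pos x).ne'
  have hd : DifferentiableAt ℝ (fun x : ℝ => Real.cosh x ^ 2) x :=
    (Real.differentiable_cosh.differentiableAt).pow 2
  rw [deriv_fun_div (c := fun x => -Real.sinh x) (Real.differentiable_sinh.differentiableAt.neg) hd (pow_ne_zero 2 h)]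
  have : deriv (fun x : ℝ => Real.cosh x ^ 2) x = 2 * Real.cosh x * Real.sinh x := by
    rw [deriv_fun_pow Real.differentiable_cosh.differentiableAt _, Real.deriv_cosh]
    ring
  rw [this, deriv.fun_neg, Real.deriv_sinh]
  have hs : Real.sinh x ^ 2 = Real.cosh x ^ 2 - 1 := by
    have := Real.cosh_sq_sub_sinh_sq x; nlinarith
  field_simp
  linear_combination 2 * hs

/-- For the MSTB kink `(tanh x, 0)`, the orthogonal fluctuation operator
`H₂₂ = -d²/dx² + σ² - 2 sech²x` has the discrete eigenfunction `sech x` with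
eigenvalue `ω² = σ² - 1`; this eigenvalue is negative (instability) when
`0 < σ < 1` and positive when `σ > 1`. -/
theorem mstb_orthogonal_mode (σ : ℝ) (hσ : 0 < σ) :
    let η : ℝ → ℝ := fun x => 1 / Real.cosh x
    (∀ x, -(deriv (deriv η) x) + (σ ^ 2 - 2 * (1 / Real.cosh x) ^ 2) * η x
      = (σ ^ 2 - 1) * η x) ∧
    (σ < 1 → σ ^ 2 - 1 < 0) ∧
    (1 < σ → 0 < σ ^ 2 - 1) := by
  refine ⟨fun x => ?_, fun h => by nlinarith, fun h => by nlinarith⟩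
  rw [sech_deriv2]
  have h : Real.cosh x ≠ 0 := (Real.cosh_pos x).ne'
  field_simp
  ring
end

section
/- For the coupled two-component φ⁴ theory with κ > 1, the orthogonal fluctuation operator H₂₂ = −d²/dx² + 2κ tanh²x − 2 around the kink (tanh x, 0) has discrete eigenvalues ω_n² = (2n+1)ρ − n² − n − 5/2 with ρ = √(2κ + 1/4), for integers n ≥ 0 satisfying κ > n(n+1)/2; in particular ω₀² = ρ − 5/2 < 0 if and only if κ < 3, so the kink (tanh x, 0) is linearly unstable for 1 < κ < 3 and linearly stable for κ > 3. -/
open Polynomial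

namespace DPhi4

noncomputable def d (a : ℝ) (n : ℕ) : ℕ → ℝ
  | 0 => if Even n then 1 else 0
  | 1 => if Even n then 0 else 1
  | (k+2) => ((k * (k + 1 + 2*a) - n * (n + 2*a + 1)) / ((k+2) * (k+1))) * d a n k

lemma d_rec (a : ℝ) (n : ℕ) (k : ℕ) :
    ((k:ℝ)+2) * ((k:ℝ)+1) * d a n (k+2)
      = ((k:ℝ) * ((k:ℝ) + 1 + 2*a) - (n:ℝ) * ((n:ℝ) + 2*a + 1)) * d a n k := by
  have h2 : ((k:ℝ)+2) ≠ 0 := by positivity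
  have h1 : ((k:ℝ)+1) ≠ 0 := by positivity
  rw [d]
  field_simp

lemma d_par (a : ℝ) (n : ℕ) : ∀ m : ℕ, m % 2 ≠ n % 2 → d a n m = 0
  | 0, h => by
    rw [d, if_neg]
    simp [Nat.even_iff] at h ⊢
    omega
  | 1, h => by
    rw [d, if_pos]
    rw [Nat.even_iff]
    omega
  | (m+2), h => by
    rw [d, d_par a n m (by omega), mul_zero]

lemma d_zero (a : ℝ) (n : ℕ) : ∀ m : ℕ, n < m → d a n m = 0
  | 0, h => by omega
  | 1, h => by
    have : n = 0 := by omega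
    subst this
    rw [d, if_pos (by simp)]
  | (m+2), h => by
    rcases lt_or_ge n m with h' | h'
    · rw [d, d_zero a n m h', mul_zero]
    · -- n = m or n = m+1
      rcases eq_or_lt_of_le h' with h'' | h''
      · -- n = m : factor vanishes
        subst h''
        rw [d]
        have : ((m:ℝ) * (m + 1 + 2*a) - (m:ℝ) * ((m:ℝ) + 2*a + 1)) = 0 := by ring
        rw [this]
        simp
      · -- n = m + 1, so d m = 0 by parity
        have hn : n = m + 1 := by omega
        rw [d, d_par a n m (by omega), mul_zero]

noncomputable def gp (a : ℝ) (n : ℕ) : Polynomial ℝ :=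
  ∑ k ∈ Finset.range (n+1), C (d a n k) * X ^ k

lemma gp_coeff (a : ℝ) (n : ℕ) (k : ℕ) : (gp a n).coeff k = d a n k := by
  rw [gp, Polynomial.finset_sum_coeff]
  simp only [coeff_C_mul, coeff_X_pow, mul_ite, mul_one, mul_zero]
  rcases lt_or_ge k (n+1) with h | h
  · rw [Finset.sum_eq_single k]
    · simp
    · intro b _ hb; simp [Ne.symm hb]
    · intro hk; exact absurd (Finset.mem_range.2 h) hk
  · rw [Finset.sum_eq_zero, d_zero a n k (by omega)]
    intro b hb
    simp only [Finset.mem_range] at hb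
    rw [if_neg (by omega)]

lemma gp_ne_zero (a : ℝ) (n : ℕ) : gp a n ≠ 0 := by
  intro h
  rcases Nat.even_or_odd n with he | ho
  · have := gp_coeff a n 0
    rw [h, coeff_zero, d, if_pos he] at this
    norm_num at this
  · have := gp_coeff a n 1
    rw [h, coeff_zero, d, if_neg (Nat.not_even_iff_odd.mpr ho)] at this
    norm_num at this

end DPhi4

namespace DPhi4

lemma gp_ode (a : ℝ) (n : ℕ) :
    (1 - X^2) * derivative (derivative (gp a n))
      - C (2*a+2) * (X * derivative (gp a n))
      + C ((n:ℝ) * ((n:ℝ) + 2*a + 1)) * gp a n = 0 := by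
  ext k
  simp only [coeff_add, coeff_sub, coeff_zero, sub_mul, one_mul, coeff_C_mul]
  match k with
  | 0 =>
    rw [coeff_X_pow_mul' (derivative (derivative (gp a n))) 2 0, if_neg (by norm_num),
      mul_coeff_zero, coeff_X_zero, zero_mul]
    simp only [coeff_derivative, gp_coeff]
    push_cast
    linear_combination d_rec a n 0
  | 1 =>
    rw [coeff_X_pow_mul' (derivative (derivative (gp a n))) 2 1, if_neg (by norm_num),
      coeff_X_mul]
    simp only [coeff_derivative, gp_coeff]
    push_cast
    linear_combination d_rec a n 1
  | (k+2) =>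
    rw [show k + 2 = k + 1 + 1 from rfl, coeff_X_mul,
      show k + 1 + 1 = k + 2 from rfl, coeff_X_pow_mul (derivative (derivative (gp a n))) 2 k]
    simp only [coeff_derivative, gp_coeff, show ∀ m:ℕ, m+1+1 = m+2 from fun m => rfl]
    push_cast
    linear_combination (norm := (push_cast; ring1)) d_rec a n (k+2)

end DPhi4

namespace DPhi4

noncomputable def T (a : ℝ) (r : Polynomial ℝ) : Polynomial ℝ :=
  C (-a) * (X * r) + (1 - X^2) * derivative r

lemma key (a : ℝ) (n : ℕ) :
    -(T a (T a (gp a n))) + (C ((a+(n:ℝ))*(a+(n:ℝ)+1)) * X^2 - C 2) * gp a n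
      = C ((a+(n:ℝ))*(a+(n:ℝ)+1) - 2 - a^2) * gp a n := by
  have h := gp_ode a n
  unfold T
  simp only [derivative_add, derivative_mul, derivative_C, derivative_X, derivative_one,
    derivative_sub, derivative_X_pow, map_mul, map_add, map_sub, map_neg, map_pow, map_one,
    map_ofNat, Nat.cast_ofNat] at h ⊢
  push_cast at h ⊢
  linear_combination (X^2 - 1) * h

end DPhi4

namespace DPhi4

open Real MeasureTheory Set

lemma hasDerivAt_tanh (x : ℝ) : HasDerivAt Real.tanh (1 - Real.tanh x ^ 2) x := by
  have h := (Real.hasDerivAt_sinh x).div (Real.hasDerivAt_cosh x) (Real.cosh_pos x).ne'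
  have he : Real.tanh = Real.sinh / Real.cosh :=
    funext fun x => Real.tanh_eq_sinh_div_cosh x
  rw [← he] at h
  refine h.congr_deriv (Eq.symm ?_)
  rw [Real.tanh_eq_sinh_div_cosh]
  have h1 := Real.cosh_sq_sub_sinh_sq x
  have h2 := (Real.cosh_pos x).ne'
  field_simp

lemma one_sub_tanh_sq_pos (x : ℝ) : 0 < 1 - Real.tanh x ^ 2 := by
  rw [Real.tanh_eq_sinh_div_cosh]
  have h1 := Real.cosh_sq_sub_sinh_sq x
  have h2 := Real.cosh_pos x
  rw [div_pow, sub_pos, div_lt_one (by positivity)]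
  nlinarith

lemma tanh_strictMono : StrictMono Real.tanh :=
  strictMono_of_deriv_pos fun x => by
    rw [(hasDerivAt_tanh x).deriv]; exact one_sub_tanh_sq_pos x

lemma abs_tanh_le_one (x : ℝ) : |Real.tanh x| ≤ 1 := by
  have h1 := one_sub_tanh_sq_pos x
  rw [abs_le]
  constructor <;> nlinarith

lemma hasDerivAt_eta (c : ℝ) (r : Polynomial ℝ) (x : ℝ) :
    HasDerivAt (fun x => Real.cosh x ^ (-c) * (r.eval (Real.tanh x)))
      (Real.cosh x ^ (-c) * ((T c r).eval (Real.tanh x))) x := by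
  have hc := Real.cosh_pos x
  have hg : HasDerivAt (fun x => Real.cosh x ^ (-c))
      (Real.cosh x ^ (-c) * (-c * Real.tanh x)) x := by
    have h := (Real.hasDerivAt_cosh x).rpow_const (p := -c) (Or.inl hc.ne')
    convert h using 1
    rw [Real.rpow_sub hc, Real.rpow_one, Real.tanh_eq_sinh_div_cosh,
      div_eq_mul_inv, div_eq_mul_inv]
    ring
  have hP : HasDerivAt (fun x => r.eval (Real.tanh x))
      (r.derivative.eval (Real.tanh x) * (1 - Real.tanh x ^ 2)) x :=
    (r.hasDerivAt (Real.tanh x)).comp x (hasDerivAt_tanh x)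
  have : HasDerivAt (fun x => Real.cosh x ^ (-c) * (r.eval (Real.tanh x))) _ x := hg.mul hP
  convert this using 1
  simp only [T, eval_add, eval_mul, eval_C, eval_X, eval_sub, eval_one, eval_pow]
  ring

lemma integrable_exp_neg_abs {b : ℝ} (hb : 0 < b) :
    Integrable (fun x : ℝ => Real.exp (-b * |x|)) := by
  have hIoi : IntegrableOn (fun x : ℝ => Real.exp (-b * |x|)) (Ioi 0) := by
    refine (exp_neg_integrableOn_Ioi 0 hb).congr_fun (fun x hx => ?_) measurableSet_Ioi
    rw [abs_of_pos hx]
  have hIic : IntegrableOn (fun x : ℝ => Real.exp (-b * |x|)) (Iic 0) := by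
    rw [← Measure.map_neg_eq_self (volume : Measure ℝ)]
    have m : MeasurableEmbedding fun x : ℝ => -x := (Homeomorph.neg ℝ).measurableEmbedding
    rw [m.integrableOn_map_iff]
    simp_rw [Function.comp_def, abs_neg, neg_preimage, neg_Iic, neg_zero]
    exact (integrableOn_Ici_iff_integrableOn_Ioi).mpr hIoi
  have h := hIic.union hIoi
  rwa [Iic_union_Ioi, integrableOn_univ] at h

lemma cosh_ge (x : ℝ) : Real.exp |x| / 2 ≤ Real.cosh x := by
  rw [Real.cosh_eq]
  rcases abs_cases x with ⟨h, _⟩ | ⟨h, _⟩ <;> rw [h] <;>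
    [linarith [Real.exp_pos (-x)]; linarith [Real.exp_pos x]]

end DPhi4

namespace DPhi4

lemma rpow_cosh_bound {b : ℝ} (hb : 0 < b) (x : ℝ) :
    Real.cosh x ^ (-b) ≤ 2 ^ b * Real.exp (-b * |x|) := by
  have hc := Real.cosh_pos x
  have h1 : Real.exp (b * |x|) / 2 ^ b ≤ Real.cosh x ^ b := by
    have h2 : (Real.exp |x| / 2) ^ b ≤ Real.cosh x ^ b :=
      Real.rpow_le_rpow (by positivity) (cosh_ge x) hb.le
    calc Real.exp (b * |x|) / 2 ^ b = (Real.exp |x|) ^ b / 2 ^ b := by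
          rw [← Real.exp_mul, mul_comm]
      _ = (Real.exp |x| / 2) ^ b := (Real.div_rpow (Real.exp_pos _).le (by norm_num : (0:ℝ) ≤ 2) b).symm
      _ ≤ _ := h2
  rw [Real.rpow_neg hc.le]
  have h3 : 0 < Real.exp (b * |x|) / 2 ^ b := by positivity
  calc (Real.cosh x ^ b)⁻¹ ≤ (Real.exp (b * |x|) / 2 ^ b)⁻¹ := by
        apply inv_anti₀ h3 h1
    _ = 2 ^ b * Real.exp (-b * |x|) := by
        rw [neg_mul, Real.exp_neg, inv_div, div_eq_mul_inv]
  done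

open Real MeasureTheory Set

lemma main (κ : ℝ) (hκ : 1 < κ) (n : ℕ) (hn : (n : ℝ) * ((n : ℝ) + 1) / 2 < κ) :
    ∃ η : ℝ → ℝ, (∃ x, η x ≠ 0) ∧
      MeasureTheory.Integrable (fun x => (η x) ^ 2) ∧
      ∀ x, -(deriv (deriv η) x) + (2 * κ * (Real.tanh x) ^ 2 - 2) * η x
        = ((2 * (n : ℝ) + 1) * Real.sqrt (2 * κ + 1 / 4) - (n : ℝ) ^ 2 - (n : ℝ) - 5 / 2)
            * η x := by
  set ρ : ℝ := Real.sqrt (2 * κ + 1 / 4) with hρdef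
  have hρsq : ρ ^ 2 = 2 * κ + 1 / 4 := Real.sq_sqrt (by linarith)
  set a : ℝ := ρ - 1/2 - (n : ℝ) with hadef
  have continuous_tanh : Continuous Real.tanh :=
    continuous_iff_continuousAt.mpr fun x => (hasDerivAt_tanh x).continuousAt
  have ha : 0 < a := by
    have h1 : ((n : ℝ) + 1/2) < ρ := by
      rw [hρdef, show ((n:ℝ) + 1/2) = Real.sqrt (((n:ℝ) + 1/2)^2) from
        (Real.sqrt_sq (by positivity)).symm]
      apply Real.sqrt_lt_sqrt (by positivity)
      nlinarith
    rw [hadef]; linarith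
  set p : Polynomial ℝ := gp a n with hpdef
  set η : ℝ → ℝ := fun x => Real.cosh x ^ (-a) * p.eval (Real.tanh x) with hηdef
  have hgpos : ∀ x, (0:ℝ) < Real.cosh x ^ (-a) :=
    fun x => Real.rpow_pos_of_pos (Real.cosh_pos x) _
  refine ⟨η, ?_, ?_, ?_⟩
  · -- nontrivial
    by_contra hcon
    push_neg at hcon
    have hroot : Set.range Real.tanh ⊆ {t | p.IsRoot t} := by
      rintro t ⟨x, rfl⟩
      have h := hcon x
      rw [hηdef] at h
      simp only [mul_eq_zero] at h
      rcases h with h | h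
      · exact absurd h (hgpos x).ne'
      · exact h
    have hinf : {t | p.IsRoot t}.Infinite :=
      (Set.infinite_range_of_injective tanh_strictMono.injective).mono hroot
    exact gp_ne_zero a n (p.eq_zero_of_infinite_isRoot hinf)
  · -- integrable
    obtain ⟨t0, _, hM⟩ := isCompact_Icc.exists_isMaxOn (Set.nonempty_Icc.mpr
      (by norm_num : (-1:ℝ) ≤ 1))
      (((p.continuous.pow 2).continuousOn) :
        ContinuousOn (fun t => (p.eval t)^2) (Icc (-1) 1))
    set M : ℝ := (p.eval t0)^2 with hMdef
    have hM0 : 0 ≤ M := sq_nonneg _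
    have hcontη : Continuous η := by
      apply Continuous.mul
      · exact Real.continuous_cosh.rpow_const fun x => Or.inl (Real.cosh_pos x).ne'
      · exact p.continuous.comp continuous_tanh
    apply Integrable.mono' (g := fun x => (2 ^ (2*a) * M) * Real.exp (-(2*a) * |x|))
      ((integrable_exp_neg_abs (by linarith)).const_mul _)
      ((hcontη.pow 2).aestronglyMeasurable)
    apply Filter.Eventually.of_forall
    intro x
    have hb1 : (Real.cosh x ^ (-a))^2 = Real.cosh x ^ (-(2*a)) := by
      rw [← Real.rpow_natCast (Real.cosh x ^ (-a)) 2,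
        ← Real.rpow_mul (Real.cosh_pos x).le]
      norm_num
      ring_nf
    have hb2 : Real.cosh x ^ (-(2*a)) ≤ 2 ^ (2*a) * Real.exp (-(2*a) * |x|) :=
      rpow_cosh_bound (by linarith) x
    have hb3 : (p.eval (Real.tanh x))^2 ≤ M := by
      apply hM
      constructor
      · linarith [abs_le.mp (abs_tanh_le_one x), (abs_le.mp (abs_tanh_le_one x)).1]
      · exact (abs_le.mp (abs_tanh_le_one x)).2
    have hb4 : 0 < Real.cosh x ^ (-(2*a)) := Real.rpow_pos_of_pos (Real.cosh_pos x) _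
    rw [Real.norm_eq_abs, Pi.pow_apply, abs_of_nonneg (by positivity : (0:ℝ) ≤ η x ^ 2)]
    calc η x ^ 2 = Real.cosh x ^ (-(2*a)) * (p.eval (Real.tanh x))^2 := by
          rw [hηdef]; rw [mul_pow, hb1]
      _ ≤ (2 ^ (2*a) * Real.exp (-(2*a) * |x|)) * M := by
          apply mul_le_mul hb2 hb3 (sq_nonneg _) (by positivity)
      _ = 2 ^ (2*a) * M * Real.exp (-(2*a) * |x|) := by ring
  · -- eigenvalue equation
    intro x
    have hder1 : deriv η = fun x => Real.cosh x ^ (-a) * (T a p).eval (Real.tanh x) :=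
      funext fun x => (hasDerivAt_eta a p x).deriv
    have hder2 : deriv (deriv η) x
        = Real.cosh x ^ (-a) * (T a (T a p)).eval (Real.tanh x) := by
      rw [hder1]; exact (hasDerivAt_eta a (T a p) x).deriv
    rw [hder2]
    have hkey := congrArg (Polynomial.eval (Real.tanh x)) (key a n)
    simp only [Polynomial.eval_add, Polynomial.eval_mul, Polynomial.eval_sub,
      Polynomial.eval_neg, Polynomial.eval_C, Polynomial.eval_X, Polynomial.eval_pow,
      Polynomial.eval_one] at hkey
    have h2κ : (a + (n:ℝ)) * (a + (n:ℝ) + 1) = 2 * κ := by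
      rw [hadef]; linear_combination hρsq
    have hE : (a + (n:ℝ)) * (a + (n:ℝ) + 1) - 2 - a^2
        = (2*(n:ℝ)+1) * ρ - (n:ℝ)^2 - (n:ℝ) - 5/2 := by
      rw [hadef]; ring
    rw [hηdef]
    linear_combination (Real.cosh x ^ (-a)) * hkey
      + (Real.cosh x ^ (-a) * p.eval (Real.tanh x) * (Real.tanh x)^2) * h2κ
      + (Real.cosh x ^ (-a) * p.eval (Real.tanh x)) * hE
      + (-(2:ℝ) * Real.cosh x ^ (-a) * p.eval (Real.tanh x) * Real.tanh x ^ 2) * hρsq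

end DPhi4

/-- For the double `φ⁴` theory with `κ > 1`, the orthogonal fluctuation operator
`H₂₂ = -d²/dx² + 2κ tanh²x - 2` around the kink `(tanh x, 0)` has, for each
`n ≥ 0` with `κ > n(n+1)/2`, a discrete (square-integrable, nontrivial)
eigenfunction with eigenvalue `ω_n² = (2n+1)ρ - n² - n - 5/2`, where
`ρ = √(2κ + 1/4)`; moreover `ω₀² = ρ - 5/2 < 0` iff `κ < 3` (instability for
`1 < κ < 3`, stability for `κ > 3`). -/
theorem double_phi4_orthogonal_spectrum (κ : ℝ) (hκ : 1 < κ) :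
    let ρ : ℝ := Real.sqrt (2 * κ + 1 / 4)
    (∀ n : ℕ, (n : ℝ) * ((n : ℝ) + 1) / 2 < κ →
      ∃ η : ℝ → ℝ, (∃ x, η x ≠ 0) ∧
        MeasureTheory.Integrable (fun x => (η x) ^ 2) ∧
        ∀ x, -(deriv (deriv η) x) + (2 * κ * (Real.tanh x) ^ 2 - 2) * η x
          = ((2 * (n : ℝ) + 1) * ρ - (n : ℝ) ^ 2 - (n : ℝ) - 5 / 2) * η x) ∧
    (ρ - 5 / 2 < 0 ↔ κ < 3) := by
  intro ρ
  refine ⟨fun n hn => DPhi4.main κ hκ n hn, ?_⟩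
  have hρdef : ρ = Real.sqrt (2 * κ + 1 / 4) := rfl
  rw [sub_neg, hρdef]
  rw [show (5/2:ℝ) = Real.sqrt ((5/2)^2) from (Real.sqrt_sq (by norm_num)).symm]
  rw [Real.sqrt_lt_sqrt_iff (by linarith)]
  constructor <;> intro h <;> nlinarith
end
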